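/- Let (α_n) and (σ_n) be positive sequences with α_n → 0 and σ_n → σ₀ ≥ 0, and for each n let (Y_k^n)_{k∈ℕ} be i.i.d. centered Gaussian random variables with variance σ_n². Then for every T > 0 and every p ≥ 1, sup_{k ≤ T/(α_n² σ_n²)} α_n |Y_k^n|^p converges to 0 in probability as n → ∞. -/

import Mathlib

open MeasureTheory ProbabilityTheory Filter Real

open scoped ENNReal NNReal

/-- Crude Gaussian tail bound: for `b ≥ 0`,
`P(|X| > b) ≤ 2 exp(-b² / (4v))` for `X ~ N(0, v)`. -/
lemma gaussian_tail_le_aux (v : ℝ≥0) (hv : 0 < (v : ℝ)) {b : ℝ} (hb : 0 ≤ b) :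
    gaussianReal 0 v {x : ℝ | b < |x|}
      ≤ ENNReal.ofReal (2 * Real.exp (-(b ^ 2) / (4 * (v : ℝ)))) := by
  have hvne : v ≠ 0 := fun h => by simp [h] at hv
  have hs : MeasurableSet {x : ℝ | b < |x|} :=
    measurableSet_lt measurable_const measurable_abs
  rw [gaussianReal_apply 0 hvne]
  set a : ℝ := (4 * (v : ℝ))⁻¹ with ha
  have hapos : 0 < a := by positivity
  set c : ℝ := (√(2 * π * (v : ℝ)))⁻¹ * Real.exp (-(b ^ 2) / (4 * (v : ℝ))) with hc
  have hsqrtpos : 0 < √(2 * π * (v : ℝ)) := Real.sqrt_pos.mpr (by positivity)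
  have hcnn : 0 ≤ c := by positivity
  have hle : ∀ x : ℝ, ({x : ℝ | b < |x|}).indicator (gaussianPDF 0 v) x
      ≤ ENNReal.ofReal (c * Real.exp (-a * x ^ 2)) := by
    intro x
    by_cases hx : b < |x|
    · rw [Set.indicator_of_mem (show x ∈ {x : ℝ | b < |x|} from hx)]
      refine ENNReal.ofReal_le_ofReal ?_
      have hb2x : b ^ 2 ≤ x ^ 2 := by
        have := pow_le_pow_left₀ hb hx.le 2
        rwa [sq_abs] at this
      have hkey : Real.exp (-(x - 0) ^ 2 / (2 * (v : ℝ)))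
          ≤ Real.exp (-(b ^ 2) / (4 * (v : ℝ))) * Real.exp (-a * x ^ 2) := by
        rw [← Real.exp_add, Real.exp_le_exp, ha]
        have h1 : -(x - 0) ^ 2 / (2 * (v : ℝ)) = -(x ^ 2) * 2 / (4 * (v : ℝ)) := by
          ring
        have h2 : -(b ^ 2) / (4 * (v : ℝ)) + -(4 * (v : ℝ))⁻¹ * x ^ 2
            = (-(b ^ 2) + -(x ^ 2)) / (4 * (v : ℝ)) := by
          field_simp
          try ring
        rw [h1, h2]
        gcongr
        linarith
      calc gaussianPDFReal 0 v x
          = (√(2 * π * (v : ℝ)))⁻¹ * Real.exp (-(x - 0) ^ 2 / (2 * (v : ℝ))) := rfl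
        _ ≤ (√(2 * π * (v : ℝ)))⁻¹
            * (Real.exp (-(b ^ 2) / (4 * (v : ℝ))) * Real.exp (-a * x ^ 2)) := by
            exact mul_le_mul_of_nonneg_left hkey (by positivity)
        _ = c * Real.exp (-a * x ^ 2) := by rw [hc]; ring
    · rw [Set.indicator_of_notMem (show x ∉ {x : ℝ | b < |x|} from hx)]
      exact zero_le
  have hInt : Integrable (fun x : ℝ => c * Real.exp (-a * x ^ 2)) :=
    (integrable_exp_neg_mul_sq hapos).const_mul c
  calc ∫⁻ x in {x : ℝ | b < |x|}, gaussianPDF 0 v x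
      = ∫⁻ x, ({x : ℝ | b < |x|}).indicator (gaussianPDF 0 v) x :=
        (lintegral_indicator hs _).symm
    _ ≤ ∫⁻ x, ENNReal.ofReal (c * Real.exp (-a * x ^ 2)) := lintegral_mono hle
    _ = ENNReal.ofReal (∫ x, c * Real.exp (-a * x ^ 2)) :=
        (ofReal_integral_eq_lintegral_ofReal hInt
          (Filter.Eventually.of_forall fun x => by positivity)).symm
    _ ≤ ENNReal.ofReal (2 * Real.exp (-(b ^ 2) / (4 * (v : ℝ)))) := by
        refine ENNReal.ofReal_le_ofReal ?_
        rw [integral_const_mul, integral_gaussian]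
        have hπa : π / a = 2 * (2 * π * (v : ℝ)) := by
          rw [ha]
          field_simp
          try ring
        have hsq : √(π / a) = √2 * √(2 * π * (v : ℝ)) := by
          rw [hπa, Real.sqrt_mul (by norm_num)]
        have hsqrt2 : √2 ≤ 2 := by
          nlinarith [Real.sq_sqrt (by norm_num : (0:ℝ) ≤ 2), Real.sqrt_nonneg 2]
        have heq : c * √(π / a) = √2 * Real.exp (-(b ^ 2) / (4 * (v : ℝ))) := by
          rw [hsq, hc]
          field_simp
        rw [heq]
        gcongr
  done

/-- `exp(-x) ≤ k! / x^k` for positive `x`. -/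
lemma exp_neg_le_factorial_div (k : ℕ) {x : ℝ} (hx : 0 < x) :
    Real.exp (-x) ≤ (k.factorial : ℝ) / x ^ k := by
  have h1 : x ^ k / (k.factorial : ℝ) ≤ Real.exp x := Real.pow_div_factorial_le_exp x hx.le k
  have hk : (0:ℝ) < (k.factorial : ℝ) := by positivity
  rw [le_div_iff₀ (pow_pos hx k), Real.exp_neg, inv_mul_eq_div,
    div_le_iff₀ (Real.exp_pos x)]
  have := (div_le_iff₀ hk).mp h1
  linarith

/-- **Gaussian filters satisfy the noise-decay condition.**
If `α n → 0` and `σ n → σ₀ ≥ 0` are positive sequences and, for each `n`,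
`(Y n k)_k` are i.i.d. centered Gaussian random variables with variance `σ n ^ 2`,
then for every `T > 0` and every `p ≥ 1`,
`sup_{k ≤ ⌊T / (α n ^ 2 * σ n ^ 2)⌋} α n * |Y n k|^p → 0` in probability as `n → ∞`. -/
theorem gaussian_noise_decay
    {Ω : Type*} [MeasurableSpace Ω] (μ : Measure Ω) [IsProbabilityMeasure μ]
    (α σ : ℕ → ℝ) (σ₀ : ℝ) (hα : ∀ n, 0 < α n) (hσ : ∀ n, 0 < σ n)
    (hα0 : Tendsto α atTop (nhds 0)) (hσ0 : Tendsto σ atTop (nhds σ₀)) (hσ₀ : 0 ≤ σ₀)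
    (Y : ℕ → ℕ → Ω → ℝ)
    (hmeas : ∀ n k, Measurable (Y n k))
    (hindep : ∀ n, iIndepFun (Y n) μ)
    (hgauss : ∀ n k, Measure.map (Y n k) μ = gaussianReal 0 (⟨(σ n) ^ 2, sq_nonneg _⟩ : NNReal))
    (T : ℝ) (hT : 0 < T) (p : ℝ) (hp : 1 ≤ p) :
    ∀ ε > 0,
      Tendsto
        (fun n =>
          μ {ω | ∃ k ≤ Nat.floor (T / ((α n) ^ 2 * (σ n) ^ 2)),
              ε < α n * |Y n k ω| ^ p})
        atTop (nhds 0) := by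
  intro ε hε
  have hp0 : 0 < p := lt_of_lt_of_le one_pos hp
  -- choose an integer exponent `m > p`
  set m : ℕ := ⌈p⌉₊ + 1 with hm
  have hpm : p < (m : ℝ) := by
    calc p ≤ (⌈p⌉₊ : ℝ) := Nat.le_ceil p
      _ < (m : ℝ) := by rw [hm]; push_cast; linarith
  have hm2 : 2 ≤ m := by
    have : 1 ≤ ⌈p⌉₊ := Nat.one_le_ceil_iff.mpr hp0
    omega
  set q : ℝ := 2 / p with hq
  have hq0 : 0 < q := by positivity
  have hqm : 2 < q * (m : ℝ) := by
    rw [hq, div_mul_eq_mul_div, lt_div_iff₀ hp0]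
    nlinarith
  set E : ℝ := (m.factorial : ℝ) * 4 ^ m / ε ^ (q * (m : ℝ)) with hE
  have hεq : 0 < ε ^ (q * (m : ℝ)) := Real.rpow_pos_of_pos hε _
  have hE0 : 0 < E := by positivity
  set D : ℕ → ℝ := fun n =>
    2 * E * (T * σ n ^ (2 * m - 2) * α n ^ (q * (m : ℝ) - 2)
      + σ n ^ (2 * m) * α n ^ (q * (m : ℝ))) with hD
  -- the dominating sequence tends to 0
  have hDlim : Tendsto D atTop (nhds 0) := by
    have h1 : Tendsto (fun n => α n ^ (q * (m : ℝ) - 2)) atTop (nhds 0) := by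
      have := hα0.rpow_const (p := q * (m : ℝ) - 2) (Or.inr (by linarith))
      rwa [Real.zero_rpow (by linarith : q * (m : ℝ) - 2 ≠ 0)] at this
    have h2 : Tendsto (fun n => α n ^ (q * (m : ℝ))) atTop (nhds 0) := by
      have := hα0.rpow_const (p := q * (m : ℝ)) (Or.inr (by linarith))
      rwa [Real.zero_rpow (by positivity : q * (m : ℝ) ≠ 0)] at this
    have h3 := ((tendsto_const_nhds (x := T)).mul (hσ0.pow (2 * m - 2))).mul h1
    have h4 := (hσ0.pow (2 * m)).mul h2
    have h5 := (tendsto_const_nhds (x := 2 * E)).mul (h3.add h4)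
    simpa using h5
  -- the key per-`n` bound
  have key : ∀ n,
      μ {ω | ∃ k ≤ Nat.floor (T / ((α n) ^ 2 * (σ n) ^ 2)),
          ε < α n * |Y n k ω| ^ p} ≤ ENNReal.ofReal (D n) := by
    intro n
    have hαn := hα n
    have hσn := hσ n
    set N : ℕ := Nat.floor (T / ((α n) ^ 2 * (σ n) ^ 2)) with hN
    set b : ℝ := (ε / α n) ^ p⁻¹ with hb
    have hεα : 0 < ε / α n := div_pos hε hαn
    have hbpos : 0 < b := Real.rpow_pos_of_pos hεα _
    set v : ℝ≥0 := (⟨(σ n) ^ 2, sq_nonneg _⟩ : NNReal) with hv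
    have hvR : (v : ℝ) = σ n ^ 2 := rfl
    have hvpos : 0 < (v : ℝ) := by rw [hvR]; positivity
    have hS : MeasurableSet {x : ℝ | b < |x|} :=
      measurableSet_lt measurable_const measurable_abs
    -- rewrite the event
    have hiff : ∀ y : ℝ, (ε < α n * |y| ^ p) ↔ b < |y| := by
      intro y
      constructor
      · intro h
        have h1 : ε / α n < |y| ^ p := (div_lt_iff₀' hαn).mpr h
        calc b < (|y| ^ p) ^ p⁻¹ := by
              rw [hb]; exact Real.rpow_lt_rpow hεα.le h1 (by positivity)
          _ = |y| := Real.rpow_rpow_inv (abs_nonneg y) (ne_of_gt hp0)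
      · intro h
        have h1 : b ^ p < |y| ^ p :=
          Real.rpow_lt_rpow hbpos.le h hp0
        rw [hb, Real.rpow_inv_rpow hεα.le (ne_of_gt hp0)] at h1
        exact (div_lt_iff₀' hαn).mp h1
    have hset : {ω | ∃ k ≤ N, ε < α n * |Y n k ω| ^ p}
        = ⋃ k ∈ Finset.range (N + 1), Y n k ⁻¹' {x : ℝ | b < |x|} := by
      ext ω
      simp only [Set.mem_setOf_eq, Set.mem_iUnion, Finset.mem_range, Set.mem_preimage,
        Nat.lt_succ_iff, exists_prop]
      exact exists_congr fun k => and_congr_right fun _ => by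
        simpa using hiff (Y n k ω)
    -- exponent bound
    have hb2 : b ^ 2 = (ε / α n) ^ q := by
      rw [hb, ← Real.rpow_natCast ((ε / α n) ^ p⁻¹) 2, ← Real.rpow_mul hεα.le]
      congr 1
      rw [hq]
      push_cast
      ring
    have hx0 : 0 < (ε / α n) ^ q / (4 * σ n ^ 2) := by
      have := Real.rpow_pos_of_pos hεα q
      positivity
    have hexp : Real.exp (-(b ^ 2) / (4 * (v : ℝ)))
        ≤ E * (σ n ^ (2 * m) * α n ^ (q * (m : ℝ))) := by
      have h1 : Real.exp (-(b ^ 2) / (4 * (v : ℝ)))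
          ≤ (m.factorial : ℝ) / ((ε / α n) ^ q / (4 * σ n ^ 2)) ^ m := by
        rw [hvR, hb2, neg_div]
        exact exp_neg_le_factorial_div m hx0
      have h2 : ((ε / α n) ^ q / (4 * σ n ^ 2)) ^ m
          = (ε ^ (q * (m : ℝ)) / α n ^ (q * (m : ℝ))) / (4 ^ m * σ n ^ (2 * m)) := by
        rw [div_pow, ← Real.rpow_natCast ((ε / α n) ^ q) m, ← Real.rpow_mul hεα.le,
          Real.div_rpow hε.le hαn.le, mul_pow, ← pow_mul]
      rw [h2] at h1
      have hαq : 0 < α n ^ (q * (m : ℝ)) := Real.rpow_pos_of_pos hαn _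
      calc Real.exp (-(b ^ 2) / (4 * (v : ℝ)))
          ≤ (m.factorial : ℝ) / ((ε ^ (q * (m : ℝ)) / α n ^ (q * (m : ℝ))) / (4 ^ m * σ n ^ (2 * m))) :=
            h1
        _ = E * (σ n ^ (2 * m) * α n ^ (q * (m : ℝ))) := by
            rw [hE]
            field_simp
    -- floor bound
    have hfloor : (N : ℝ) ≤ T / (α n ^ 2 * σ n ^ 2) := by
      rw [hN]
      exact Nat.floor_le (by positivity)
    -- algebraic identity
    have hσsplit : σ n ^ (2 * m) = σ n ^ (2 * m - 2) * σ n ^ 2 := by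
      rw [← pow_add]
      congr 1
      try omega
    have hαsplit : α n ^ (q * (m : ℝ)) = α n ^ (q * (m : ℝ) - 2) * α n ^ 2 := by
      rw [← Real.rpow_natCast (α n) 2, ← Real.rpow_add hαn]
      congr 1
      push_cast
      ring
    have hDn : (T / (α n ^ 2 * σ n ^ 2) + 1)
        * (2 * (E * (σ n ^ (2 * m) * α n ^ (q * (m : ℝ))))) = D n := by
      simp only [hD]
      rw [hσsplit, hαsplit]
      field_simp
    have hreal : ((N : ℝ) + 1) * (2 * Real.exp (-(b ^ 2) / (4 * (v : ℝ)))) ≤ D n := by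
      rw [← hDn]
      have hbpos1 : (0:ℝ) ≤ T / (α n ^ 2 * σ n ^ 2) + 1 := by positivity
      refine mul_le_mul (by linarith) (by linarith [hexp]) (by positivity) hbpos1
    -- measure bound
    calc μ {ω | ∃ k ≤ N, ε < α n * |Y n k ω| ^ p}
        = μ (⋃ k ∈ Finset.range (N + 1), Y n k ⁻¹' {x : ℝ | b < |x|}) := by rw [hset]
      _ ≤ ∑ k ∈ Finset.range (N + 1), μ (Y n k ⁻¹' {x : ℝ | b < |x|}) :=
          measure_biUnion_finset_le _ _
      _ = ∑ k ∈ Finset.range (N + 1), gaussianReal 0 v {x : ℝ | b < |x|} := by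
          refine Finset.sum_congr rfl fun k _ => ?_
          rw [← hgauss n k, Measure.map_apply (hmeas n k) hS]
      _ ≤ ∑ k ∈ Finset.range (N + 1),
            ENNReal.ofReal (2 * Real.exp (-(b ^ 2) / (4 * (v : ℝ)))) :=
          Finset.sum_le_sum fun _ _ => gaussian_tail_le_aux v hvpos hbpos.le
      _ = (N + 1 : ℕ) * ENNReal.ofReal (2 * Real.exp (-(b ^ 2) / (4 * (v : ℝ)))) := by
          rw [Finset.sum_const, Finset.card_range, nsmul_eq_mul]
      _ = ENNReal.ofReal (((N : ℝ) + 1) * (2 * Real.exp (-(b ^ 2) / (4 * (v : ℝ))))) := by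
          rw [← ENNReal.ofReal_natCast (N + 1), ← ENNReal.ofReal_mul (by positivity)]
          push_cast
          try ring
      _ ≤ ENNReal.ofReal (D n) := ENNReal.ofReal_le_ofReal hreal
  -- conclude by squeezing
  have hupper : Tendsto (fun n => ENNReal.ofReal (D n)) atTop (nhds 0) := by
    have := (ENNReal.continuous_ofReal.tendsto 0).comp hDlim
    simpa [Function.comp_def] using this
  exact tendsto_of_tendsto_of_tendsto_of_le_of_le tendsto_const_nhds hupper
    (fun n => zero_le) key
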